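/- Let F = (AR, att) be an argument graph. For every preferred extension of defenses D ∈ PR(DG(F)), the set def(D) is a preferred extension of F, i.e., def(D) ∈ pr(F). -/

import Mathlib

open Set

/-- An argument graph (argumentation framework): a finite set of arguments
with an attack relation between arguments of the graph. -/
structure AF (A : Type*) where
  AR : Set A
  att : A → A → Prop
  finite : AR.Finite
  att_mem : ∀ a b, att a b → a ∈ AR ∧ b ∈ AR

namespace AF

variable {A : Type*} (F : AF A)

/-- An argument is initial if no argument attacks it. -/
def Initial (a : A) : Prop := ∀ b, ¬ F.att b a

/-- A set of arguments is conflict-free. -/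
def ConflictFree (E : Set A) : Prop :=
  E ⊆ F.AR ∧ ∀ a ∈ E, ∀ b ∈ E, ¬ F.att a b

/-- α is defended by E: every attacker of α is attacked by E. -/
def Defends (E : Set A) (a : A) : Prop :=
  ∀ b, F.att b a → ∃ c ∈ E, F.att c b

def Admissible (E : Set A) : Prop :=
  F.ConflictFree E ∧ ∀ a ∈ E, F.Defends E a

def Complete (E : Set A) : Prop :=
  F.Admissible E ∧ ∀ a ∈ F.AR, F.Defends E a → a ∈ E

/-- The set of complete extensions. -/
def co : Set (Set A) := {E | F.Complete E}

/-- The set of grounded extensions (minimal complete extensions). -/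
def gr : Set (Set A) := {E | F.Complete E ∧ ∀ E', F.Complete E' → E ⊆ E'}

/-- The set of preferred extensions (maximal complete extensions). -/
def pr : Set (Set A) := {E | F.Complete E ∧ ∀ E', F.Complete E' → E ⊆ E' → E = E'}

/-- The set of stable extensions. -/
def st : Set (Set A) :=
  {E | F.ConflictFree E ∧ ∀ a ∈ F.AR, a ∉ E → ∃ b ∈ E, F.att b a}

/-- The set of defenses of `F`.  A defense is either a pair `⟨some α, β⟩` with
`{α, β}` conflict-free and some `γ` with `α→γ` and `γ→β`, or a pair
`⟨none, β⟩` with `β` initial (`none` plays the role of `⌀`). -/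
def nmd : Set (Option A × A) :=
  {p | (∃ α, p.1 = some α ∧ α ∈ F.AR ∧ p.2 ∈ F.AR ∧
          F.ConflictFree {α, p.2} ∧
          ∃ γ, γ ∈ F.AR ∧ F.att α γ ∧ F.att γ p.2)
     ∨ (p.1 = none ∧ p.2 ∈ F.AR ∧ F.Initial p.2)}

/-- The set of defeaters of defenses (DoDs) of `F`. -/
def und : Set (Option A × A) :=
  {p | (∃ α, p.1 = some α ∧ α ∈ F.AR ∧ p.2 ∈ F.AR ∧
          ¬ F.ConflictFree {α, p.2} ∧
          ∃ γ, γ ∈ F.AR ∧ γ ≠ α ∧ γ ≠ p.2 ∧ F.att α γ ∧ F.att γ p.2)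
     ∨ (p.1 = none ∧ p.2 ∈ F.AR ∧
          (F.att p.2 p.2 ∨ ∃ γ, F.att γ γ ∧ F.att γ p.2))}

/-- Nodes of the defense graph: defenses together with their defeaters. -/
def dgn : Set (Option A × A) := F.nmd ∪ F.und

/-- Lifting of the attack relation to `Option`: conditions mentioning `⌀` are false. -/
def oatt (x y : Option A) : Prop := ∃ a b, x = some a ∧ y = some b ∧ F.att a b

/-- The attack relation `→d` of the defense graph:
`[x,α] →d [y,β]` iff `x→y`, `x→β`, `α→y` or `α→β`. -/
def dAtt (p q : Option A × A) : Prop :=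
  F.oatt p.1 q.1 ∨ F.oatt p.1 (some q.2) ∨ F.oatt (some p.2) q.1 ∨ F.att p.2 q.2

/-- Conflict-freeness of a set of defenses. -/
def DConflictFree (D : Set (Option A × A)) : Prop :=
  D ⊆ F.nmd ∧ ∀ X ∈ D, ∀ Y ∈ D, ¬ F.dAtt X Y

/-- A defense X is defended by D in the defense graph. -/
def DDefends (D : Set (Option A × A)) (X : Option A × A) : Prop :=
  ∀ Y ∈ F.dgn, F.dAtt Y X → ∃ Z ∈ D, F.dAtt Z Y

def DAdmissible (D : Set (Option A × A)) : Prop :=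
  F.DConflictFree D ∧ ∀ X ∈ D, F.DDefends D X

def DComplete (D : Set (Option A × A)) : Prop :=
  F.DAdmissible D ∧ ∀ X ∈ F.nmd, F.DDefends D X → X ∈ D

/-- Complete extensions of defenses of the defense graph DG(F). -/
def CO : Set (Set (Option A × A)) := {D | F.DComplete D}

/-- Grounded extensions of defenses (minimal complete extensions of defenses). -/
def GR : Set (Set (Option A × A)) :=
  {D | F.DComplete D ∧ ∀ D', F.DComplete D' → D ⊆ D'}

/-- Preferred extensions of defenses (maximal complete extensions of defenses). -/
def PR : Set (Set (Option A × A)) :=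
  {D | F.DComplete D ∧ ∀ D', F.DComplete D' → D ⊆ D' → D = D'}

/-- Stable extensions of defenses. -/
def ST : Set (Set (Option A × A)) :=
  {D | F.DConflictFree D ∧ ∀ X ∈ F.dgn, X ∉ D → ∃ Z ∈ D, F.dAtt Z X}

/-- `def(D)`: the defendees and defenders occurring in `D`. -/
def defSet (D : Set (Option A × A)) : Set A :=
  {a | a ∈ F.AR ∧ ((∃ x, (x, a) ∈ D) ∨ (∃ b, ((some a : Option A), b) ∈ D))}

/-- `d(E) = {⟨x,y⟩ ∈ nmd(F) : x ∈ E ∪ {⌀} and y ∈ E}`. -/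
def dE (E : Set A) : Set (Option A × A) :=
  {p | p ∈ F.nmd ∧ (p.1 = none ∨ ∃ a ∈ E, p.1 = some a) ∧ p.2 ∈ E}

/-- The arguments occurring in some defeater of defenses of `F`. -/
def argUnd : Set A :=
  {a | a ∈ F.AR ∧ ((∃ b, ((some a : Option A), b) ∈ F.und) ∨ ∃ x, (x, a) ∈ F.und)}

/-- The c-kernel of `F`. -/
def ck : AF A where
  AR := F.AR
  att a b := F.att a b ∧ ¬(a ≠ b ∧ F.att a a ∧ F.att b b)
  finite := F.finite
  att_mem a b h := F.att_mem a b h.1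

/-- Union of two argument graphs. -/
def union (F G : AF A) : AF A where
  AR := F.AR ∪ G.AR
  att a b := F.att a b ∨ G.att a b
  finite := F.finite.union G.finite
  att_mem a b h := by
    rcases h with h | h
    · exact ⟨Or.inl (F.att_mem a b h).1, Or.inl (F.att_mem a b h).2⟩
    · exact ⟨Or.inr (G.att_mem a b h).1, Or.inr (G.att_mem a b h).2⟩

/-- A set of defenses `D` regarded as a binary relation on `AR ∪ {⌀}`. -/
def dRel (D : Set (Option A × A)) : Option A → Option A → Prop :=
  fun x y => ∃ b, y = some b ∧ (x, b) ∈ D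

/-- The root reason `RR(α, D)` of `α` w.r.t. an extension of defenses `D`,
where `D⁺` is the transitive closure of `D`. -/
def RR (α : A) (D : Set (Option A × A)) : Set (Option A) :=
  {x | (F.Initial α ∧ x = none) ∨
       (¬ F.Initial α ∧ ∃ β, x = some β ∧ β ∈ F.AR ∧
         ((Relation.TransGen (dRel D) (some β) (some β) ∧ β = α) ∨
          (Relation.TransGen (dRel D) (some β) (some α) ∧
            (Relation.TransGen (dRel D) (some β) (some β) ∨ F.Initial β))))}

/-- The set of root reasons for accepting `α` under complete defense semantics. -/
def rrCO (α : A) : Set (Set (Option A)) :=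
  {S | ∃ D ∈ F.CO, S = F.RR α D}

end AF

section Aux

namespace AF

variable {A : Type*} {F : AF A}

lemma dAtt_of {p q : Option A × A} {y x : A}
    (hy : p.1 = some y ∨ p.2 = y) (hx : q.1 = some x ∨ q.2 = x)
    (h : F.att y x) : F.dAtt p q := by
  rcases hy with hy | hy <;> rcases hx with hx | hx
  · exact Or.inl ⟨y, x, hy, hx, h⟩
  · exact Or.inr (Or.inl ⟨y, x, hy, by rw [hx], h⟩)
  · exact Or.inr (Or.inr (Or.inl ⟨y, x, by rw [hy], hx, h⟩))
  · exact Or.inr (Or.inr (Or.inr (by rw [hy, hx]; exact h)))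

lemma dAtt_elim {p q : Option A × A} (h : F.dAtt p q) :
    ∃ y x, (p.1 = some y ∨ p.2 = y) ∧ (q.1 = some x ∨ q.2 = x) ∧ F.att y x := by
  rcases h with ⟨a, b, h1, h2, h⟩ | ⟨a, b, h1, h2, h⟩ | ⟨a, b, h1, h2, h⟩ | h
  · exact ⟨a, b, Or.inl h1, Or.inl h2, h⟩
  · exact ⟨a, b, Or.inl h1, Or.inr (Option.some.inj h2), h⟩
  · exact ⟨a, b, Or.inr (Option.some.inj h1), Or.inl h2, h⟩
  · exact ⟨p.2, q.2, Or.inr rfl, Or.inr rfl, h⟩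

lemma comp_mem_defSet {D : Set (Option A × A)} (hsub : D ⊆ F.nmd)
    {p : Option A × A} (hp : p ∈ D) {c : A}
    (hc : p.1 = some c ∨ p.2 = c) : c ∈ F.defSet D := by
  obtain ⟨x, β⟩ := p
  have hCAR : c ∈ F.AR := by
    rcases hsub hp with ⟨α, h1, hα, h2, _⟩ | ⟨h1, h2, _⟩
    · rcases hc with hc | hc
      · simp only at hc h1; rw [h1] at hc; rwa [← Option.some.inj hc]
      · simp only at hc; rwa [← hc]
    · rcases hc with hc | hc
      · simp only at hc h1; rw [h1] at hc; cases hc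
      · simp only at hc; rwa [← hc]
  refine ⟨hCAR, ?_⟩
  rcases hc with hc | hc
  · simp only at hc; subst hc; exact Or.inr ⟨β, hp⟩
  · simp only at hc; subst hc; exact Or.inl ⟨x, hp⟩

lemma exists_of_mem_defSet {D : Set (Option A × A)} {c : A} (hc : c ∈ F.defSet D) :
    ∃ p ∈ D, p.1 = some c ∨ p.2 = c := by
  rcases hc.2 with ⟨x, hx⟩ | ⟨b, hb⟩
  · exact ⟨(x, c), hx, Or.inr rfl⟩
  · exact ⟨(some c, b), hb, Or.inl rfl⟩

lemma exists_dAtt_of_defSet_att {D : Set (Option A × A)} {c y : A}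
    (hc : c ∈ F.defSet D) {Y : Option A × A}
    (hy : Y.1 = some y ∨ Y.2 = y) (h : F.att c y) :
    ∃ Z ∈ D, F.dAtt Z Y := by
  obtain ⟨Z, hZ, hZc⟩ := exists_of_mem_defSet hc
  exact ⟨Z, hZ, dAtt_of hZc hy h⟩

lemma defSet_conflictFree {D : Set (Option A × A)} (hD : F.DConflictFree D) :
    F.ConflictFree (F.defSet D) := by
  refine ⟨fun a ha => ha.1, fun a ha b hb hab => ?_⟩
  obtain ⟨Z, hZ, hZa⟩ := exists_of_mem_defSet ha
  obtain ⟨W, hW, hWb⟩ := exists_of_mem_defSet hb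
  exact hD.2 Z hZ W hW (dAtt_of hZa hWb hab)

lemma defSet_defends {D : Set (Option A × A)} (hD : F.DComplete D) {a : A}
    (ha : a ∈ F.defSet D) : F.Defends (F.defSet D) a := by
  intro b hb
  by_contra hno
  push_neg at hno
  have hDsub : D ⊆ F.nmd := hD.1.1.1
  have hcf := defSet_conflictFree hD.1.1
  have haAR : a ∈ F.AR := ha.1
  have hbAR : b ∈ F.AR := (F.att_mem b a hb).1
  have haa : ¬ F.att a a := hcf.2 a ha a ha
  have hba : b ≠ a := by rintro rfl; exact haa hb
  obtain ⟨X, hX, hXa⟩ := exists_of_mem_defSet ha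
  have hXdef : F.DDefends D X := hD.1.2 X hX
  have step : ∀ Y ∈ F.dgn, ∀ y : A, (Y.1 = some y ∨ Y.2 = y) → F.att y a →
      ∃ c ∈ F.defSet D, ((∃ y', Y.1 = some y' ∧ F.att c y') ∨ F.att c Y.2) := by
    intro Y hY y hYy hya
    obtain ⟨Z, hZ, hZY⟩ := hXdef Y hY (dAtt_of hYy hXa hya)
    obtain ⟨c, x, hc, hx, hcx⟩ := dAtt_elim hZY
    refine ⟨c, comp_mem_defSet hDsub hZ hc, ?_⟩
    rcases hx with hx | hx
    · exact Or.inl ⟨x, hx, hcx⟩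
    · right; rw [hx]; exact hcx
  by_cases h1 : F.Initial b ∨ F.att b b ∨ ∃ s, F.att s s ∧ F.att s b
  · have hY : ((none, b) : Option A × A) ∈ F.dgn := by
      rcases h1 with h1 | h1
      · exact Set.mem_union_left _ (Or.inr ⟨rfl, hbAR, h1⟩)
      · exact Set.mem_union_right _ (Or.inr ⟨rfl, hbAR, h1⟩)
    obtain ⟨c, hcE, hc⟩ := step (none, b) hY b (Or.inr rfl) hb
    rcases hc with ⟨y', hy', _⟩ | hc
    · cases hy'
    · exact hno c hcE hc
  · push_neg at h1
    obtain ⟨hbinit, hbb, hself⟩ := h1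
    have star : ∀ s r : A, F.att s r → F.att r b → ∃ c ∈ F.defSet D, F.att c s := by
      intro s r hsr hrb
      have hrs : r ≠ s := by rintro rfl; exact hself r hsr hrb
      have hrb' : r ≠ b := by rintro rfl; exact hbb hrb
      have hsAR : s ∈ F.AR := (F.att_mem s r hsr).1
      have hrAR : r ∈ F.AR := (F.att_mem r b hrb).1
      have hY : ((some s, b) : Option A × A) ∈ F.dgn := by
        by_cases hcfsb : F.ConflictFree {s, b}
        · exact Set.mem_union_left _
            (Or.inl ⟨s, rfl, hsAR, hbAR, hcfsb, r, hrAR, hsr, hrb⟩)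
        · exact Set.mem_union_right _
            (Or.inl ⟨s, rfl, hsAR, hbAR, hcfsb, r, hrAR, hrs, hrb', hsr, hrb⟩)
      obtain ⟨c, hcE, hc⟩ := step _ hY b (Or.inr rfl) hb
      rcases hc with ⟨y', hy', hcy⟩ | hc
      · refine ⟨c, hcE, ?_⟩
        have : s = y' := Option.some.inj hy'
        rwa [this]
      · exact absurd hc (hno c hcE)
    have no_adef : ∀ r, F.att a r → ¬ F.att r b := by
      intro r har hrb
      have hra : r ≠ a := by rintro rfl; exact haa har
      have hrb' : r ≠ b := by rintro rfl; exact hbb hrb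
      have hrAR := (F.att_mem a r har).2
      have hncf : ¬ F.ConflictFree {a, b} := fun h =>
        h.2 b (Set.mem_insert_iff.2 (Or.inr rfl)) a (Set.mem_insert _ _) hb
      have hY : ((some a, b) : Option A × A) ∈ F.und :=
        Or.inl ⟨a, rfl, haAR, hbAR, hncf, r, hrAR, hra, hrb', har, hrb⟩
      obtain ⟨c, hcE, hc⟩ := step _ (Set.mem_union_right _ hY) b (Or.inr rfl) hb
      rcases hc with ⟨y', hy', hcy⟩ | hc
      · have hca : F.att c a := by
          have : a = y' := Option.some.inj hy'
          rwa [← this] at hcy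
        exact hcf.2 c hcE a ha hca
      · exact hno c hcE hc
    simp only [AF.Initial, not_forall, not_not] at hbinit
    obtain ⟨r0, hr0⟩ := hbinit
    have hr0AR := (F.att_mem r0 b hr0).1
    have hr0r0 : ¬ F.att r0 r0 := fun h => hself r0 h hr0
    have hbr0 : b ≠ r0 := by rintro rfl; exact hbb hr0
    by_cases hcfra : F.ConflictFree {r0, a}
    · have hW : ((some r0, a) : Option A × A) ∈ F.nmd :=
        Or.inl ⟨r0, rfl, hr0AR, haAR, hcfra, b, hbAR, hr0, hb⟩
      have hWdef : F.DDefends D (some r0, a) := by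
        intro Y hY hYW
        obtain ⟨y, x, hy, hx, hyx⟩ := dAtt_elim hYW
        rcases hx with hx | hx
        · have hx' : r0 = x := Option.some.inj hx
          have hyr0 : F.att y r0 := by rwa [← hx'] at hyx
          obtain ⟨c, hcE, hc⟩ := star y r0 hyr0 hr0
          exact exists_dAtt_of_defSet_att hcE hy hc
        · have hya : F.att y a := by rw [show a = x from hx]; exact hyx
          exact hXdef Y hY (dAtt_of hy hXa hya)
      have hWD : ((some r0, a) : Option A × A) ∈ D := hD.2 _ hW hWdef
      exact hno r0 (comp_mem_defSet hDsub hWD (Or.inl rfl)) hr0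
    · have hatt : F.att r0 a ∨ F.att a r0 := by
        by_contra hcon
        push_neg at hcon
        refine hcfra ⟨?_, ?_⟩
        · intro x hx
          simp only [Set.mem_insert_iff, Set.mem_singleton_iff] at hx
          rcases hx with rfl | rfl
          · exact hr0AR
          · exact haAR
        · intro x hx y hy hxy
          simp only [Set.mem_insert_iff, Set.mem_singleton_iff] at hx hy
          rcases hx with rfl | rfl <;> rcases hy with rfl | rfl
          · exact hr0r0 hxy
          · exact hcon.1 hxy
          · exact hcon.2 hxy
          · exact haa hxy
      rcases hatt with hr0a | har0
      · have hY : ((some r0, a) : Option A × A) ∈ F.und :=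
          Or.inl ⟨r0, rfl, hr0AR, haAR, hcfra, b, hbAR,
            hbr0, hba, hr0, hb⟩
        obtain ⟨c, hcE, hc⟩ := step _ (Set.mem_union_right _ hY) r0 (Or.inl rfl) hr0a
        rcases hc with ⟨y', hy', hcy⟩ | hc
        · have hcr0 : F.att c r0 := by
            have : r0 = y' := Option.some.inj hy'
            rwa [← this] at hcy
          obtain ⟨c', hc'E, hc'c⟩ := star c r0 hcr0 hr0
          exact hcf.2 c' hc'E c hcE hc'c
        · exact hcf.2 c hcE a ha hc
      · exact no_adef r0 har0 hr0

lemma defSet_complete {D : Set (Option A × A)} (hD : F.DComplete D) :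
    F.Complete (F.defSet D) := by
  have hDsub : D ⊆ F.nmd := hD.1.1.1
  have hcf := defSet_conflictFree hD.1.1
  refine ⟨⟨hcf, fun a ha => defSet_defends hD ha⟩, ?_⟩
  intro a haAR hdef
  have hnEa : ∀ c ∈ F.defSet D, ¬ F.att c a := by
    intro c hcE hca
    obtain ⟨c', hc'E, hc'c⟩ := hdef c hca
    exact hcf.2 c' hc'E c hcE hc'c
  have haa : ¬ F.att a a := by
    intro h
    obtain ⟨c, hcE, hca⟩ := hdef a h
    exact hnEa c hcE hca
  by_cases hainit : F.Initial a
  · have hW : ((none, a) : Option A × A) ∈ F.nmd := Or.inr ⟨rfl, haAR, hainit⟩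
    have hWdef : F.DDefends D (none, a) := by
      intro Y hY hYW
      obtain ⟨y, x, hy, hx, hyx⟩ := dAtt_elim hYW
      rcases hx with hx | hx
      · cases hx
      · exact absurd (by rw [show a = x from hx]; exact hyx) (hainit y)
    exact ⟨haAR, Or.inl ⟨none, hD.2 _ hW hWdef⟩⟩
  · simp only [AF.Initial, not_forall, not_not] at hainit
    obtain ⟨γ0, hγ0⟩ := hainit
    obtain ⟨c0, hc0E, hc0γ⟩ := hdef γ0 hγ0
    have hc0AR : c0 ∈ F.AR := hc0E.1
    have hcfca : F.ConflictFree {c0, a} := by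
      refine ⟨?_, ?_⟩
      · intro x hx
        simp only [Set.mem_insert_iff, Set.mem_singleton_iff] at hx
        rcases hx with rfl | rfl
        · exact hc0AR
        · exact haAR
      · intro x hx y hy hxy
        simp only [Set.mem_insert_iff, Set.mem_singleton_iff] at hx hy
        rcases hx with rfl | rfl <;> rcases hy with rfl | rfl
        · exact hcf.2 _ hc0E _ hc0E hxy
        · exact hnEa _ hc0E hxy
        · obtain ⟨c, hcE, hca⟩ := defSet_defends hD hc0E _ hxy
          exact hnEa _ hcE hca
        · exact haa hxy
    have hW : ((some c0, a) : Option A × A) ∈ F.nmd :=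
      Or.inl ⟨c0, rfl, hc0AR, haAR, hcfca, γ0, (F.att_mem γ0 a hγ0).1, hc0γ, hγ0⟩
    have hWdef : F.DDefends D (some c0, a) := by
      intro Y hY hYW
      obtain ⟨y, x, hy, hx, hyx⟩ := dAtt_elim hYW
      rcases hx with hx | hx
      · have hyc0 : F.att y c0 := by rw [show c0 = x from Option.some.inj hx]; exact hyx
        obtain ⟨c, hcE, hcy⟩ := defSet_defends hD hc0E y hyc0
        exact exists_dAtt_of_defSet_att hcE hy hcy
      · have hya : F.att y a := by rw [show a = x from hx]; exact hyx
        obtain ⟨c, hcE, hcy⟩ := hdef y hya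
        exact exists_dAtt_of_defSet_att hcE hy hcy
    exact ⟨haAR, Or.inl ⟨some c0, hD.2 _ hW hWdef⟩⟩

lemma comp_dE {E : Set A} {p : Option A × A} (hp : p ∈ F.dE E) {c : A}
    (hc : p.1 = some c ∨ p.2 = c) : c ∈ E := by
  rcases hc with hc | hc
  · rcases hp.2.1 with h | ⟨a, haE, h⟩
    · rw [h] at hc; cases hc
    · rw [h] at hc; rwa [← Option.some.inj hc]
  · rw [← hc]; exact hp.2.2

lemma exists_dE_comp {E : Set A} (hE : F.Complete E) {c : A} (hc : c ∈ E) :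
    ∃ p ∈ F.dE E, p.1 = some c ∨ p.2 = c := by
  have hcAR : c ∈ F.AR := hE.1.1.1 hc
  by_cases hin : F.Initial c
  · exact ⟨(none, c), ⟨Or.inr ⟨rfl, hcAR, hin⟩, Or.inl rfl, hc⟩, Or.inr rfl⟩
  · simp only [AF.Initial, not_forall, not_not] at hin
    obtain ⟨γ, hγ⟩ := hin
    obtain ⟨e, heE, heγ⟩ := hE.1.2 c hc γ hγ
    have hcfec : F.ConflictFree {e, c} := by
      refine ⟨?_, ?_⟩
      · intro x hx
        simp only [Set.mem_insert_iff, Set.mem_singleton_iff] at hx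
        rcases hx with rfl | rfl
        · exact hE.1.1.1 heE
        · exact hcAR
      · intro x hx y hy hxy
        simp only [Set.mem_insert_iff, Set.mem_singleton_iff] at hx hy
        rcases hx with rfl | rfl <;> rcases hy with rfl | rfl
        · exact hE.1.1.2 _ heE _ heE hxy
        · exact hE.1.1.2 _ heE _ hc hxy
        · exact hE.1.1.2 _ hc _ heE hxy
        · exact hE.1.1.2 _ hc _ hc hxy
    exact ⟨(some e, c), ⟨Or.inl ⟨e, rfl, hE.1.1.1 heE, hcAR, hcfec, γ,
      (F.att_mem γ c hγ).1, heγ, hγ⟩, Or.inr ⟨e, heE, rfl⟩, hc⟩, Or.inr rfl⟩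

lemma dE_dAdmissible {E : Set A} (hE : F.Complete E) : F.DAdmissible (F.dE E) := by
  refine ⟨⟨fun p hp => hp.1, ?_⟩, ?_⟩
  · intro X hX Y hY hXY
    obtain ⟨y, x, hy, hx, hyx⟩ := dAtt_elim hXY
    exact hE.1.1.2 y (comp_dE hX hy) x (comp_dE hY hx) hyx
  · intro X hX Y hY hYX
    obtain ⟨y, x, hy, hx, hyx⟩ := dAtt_elim hYX
    obtain ⟨c, hcE, hcy⟩ := hE.1.2 x (comp_dE hX hx) y hyx
    obtain ⟨Z, hZ, hZc⟩ := exists_dE_comp hE hcE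
    exact ⟨Z, hZ, dAtt_of hZc hy hcy⟩

lemma defSet_dE {E : Set A} (hE : F.Complete E) : F.defSet (F.dE E) = E := by
  ext a
  constructor
  · rintro ⟨haAR, h⟩
    rcases h with ⟨x, hx⟩ | ⟨b, hb⟩
    · exact comp_dE hx (Or.inr rfl)
    · exact comp_dE hb (Or.inl rfl)
  · intro ha
    obtain ⟨p, hp, hc⟩ := exists_dE_comp hE ha
    refine ⟨hE.1.1.1 ha, ?_⟩
    obtain ⟨x, β⟩ := p
    rcases hc with hc | hc
    · simp only at hc; subst hc; exact Or.inr ⟨β, hp⟩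
    · simp only at hc; subst hc; exact Or.inl ⟨x, hp⟩

lemma subset_dE_defSet {D : Set (Option A × A)} (hsub : D ⊆ F.nmd) :
    D ⊆ F.dE (F.defSet D) := by
  intro p hp
  refine ⟨hsub hp, ?_, comp_mem_defSet hsub hp (Or.inr rfl)⟩
  rcases hsub hp with ⟨α, h1, _, _, _⟩ | ⟨h1, _, _⟩
  · exact Or.inr ⟨α, comp_mem_defSet hsub hp (Or.inl h1), h1⟩
  · exact Or.inl h1

lemma dE_mono {E E' : Set A} (h : E ⊆ E') : F.dE E ⊆ F.dE E' := by
  intro p hp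
  refine ⟨hp.1, ?_, h hp.2.2⟩
  rcases hp.2.1 with h1 | ⟨a, ha, h1⟩
  · exact Or.inl h1
  · exact Or.inr ⟨a, h ha, h1⟩

lemma nmd_finite : F.nmd.Finite := by
  apply Set.Finite.subset
    (Set.Finite.prod ((F.finite.image some).insert none) F.finite)
  rintro ⟨x, β⟩ hp
  rcases hp with ⟨α, h1, hα, h2, _⟩ | ⟨h1, h2, _⟩
  · exact Set.mem_prod.2 ⟨by rw [h1]; exact Set.mem_insert_of_mem _ ⟨α, hα, rfl⟩, h2⟩
  · exact Set.mem_prod.2 ⟨by rw [h1]; exact Set.mem_insert _ _, h2⟩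

lemma insert_dAdmissible {D : Set (Option A × A)} {X : Option A × A}
    (hD : F.DAdmissible D) (hX : X ∈ F.nmd) (hdef : F.DDefends D X) :
    F.DAdmissible (insert X D) := by
  have hXdgn : X ∈ F.dgn := Set.mem_union_left _ hX
  have hnoDX : ∀ Z ∈ D, ¬ F.dAtt Z X := by
    intro Z hZ hZX
    obtain ⟨Z', hZ', hZ'Z⟩ := hdef Z (Set.mem_union_left _ (hD.1.1 hZ)) hZX
    exact hD.1.2 Z' hZ' Z hZ hZ'Z
  refine ⟨⟨?_, ?_⟩, ?_⟩
  · intro Z hZ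
    rcases Set.mem_insert_iff.1 hZ with rfl | hZ
    · exact hX
    · exact hD.1.1 hZ
  · intro Z hZ W hW hZW
    rcases Set.mem_insert_iff.1 hZ with hZ' | hZ' <;>
      rcases Set.mem_insert_iff.1 hW with hW' | hW'
    · obtain ⟨Z', hZ'', h⟩ := hdef X hXdgn (by rw [hZ', hW'] at hZW; exact hZW)
      exact hnoDX Z' hZ'' h
    · obtain ⟨Z', hZ'', h⟩ := hD.2 W hW' X hXdgn (by rw [hZ'] at hZW; exact hZW)
      exact hnoDX Z' hZ'' h
    · exact hnoDX Z hZ' (by rw [hW'] at hZW; exact hZW)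
    · exact hD.1.2 Z hZ' W hW' hZW
  · intro Z hZ Y hY hYZ
    rcases Set.mem_insert_iff.1 hZ with hZ' | hZ'
    · obtain ⟨Z', h1, h2⟩ := hdef Y hY (by rw [hZ'] at hYZ; exact hYZ)
      exact ⟨Z', Set.mem_insert_of_mem _ h1, h2⟩
    · obtain ⟨Z', h1, h2⟩ := hD.2 Z hZ' Y hY hYZ
      exact ⟨Z', Set.mem_insert_of_mem _ h1, h2⟩

lemma exists_dComplete_superset {D0 : Set (Option A × A)} (h0 : F.DAdmissible D0) :
    ∃ D', F.DComplete D' ∧ D0 ⊆ D' := by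
  have hfin : {D : Set (Option A × A) | F.DAdmissible D ∧ D0 ⊆ D}.Finite :=
    Set.Finite.subset (Set.Finite.finite_subsets F.nmd_finite) (fun D hD => hD.1.1.1)
  obtain ⟨D', ⟨hadm, hsub⟩, hmax⟩ :=
    Set.Finite.exists_maximalFor id _ hfin ⟨D0, h0, subset_rfl⟩
  refine ⟨D', ⟨hadm, ?_⟩, hsub⟩
  intro X hX hdef
  have h2 : D' = insert X D' :=
    Set.Subset.antisymm (Set.subset_insert _ _) (hmax ⟨insert_dAdmissible hadm hX hdef,
      hsub.trans (Set.subset_insert _ _)⟩ (Set.subset_insert _ _))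
  rw [h2]
  exact Set.mem_insert _ _

end AF

end Aux


/-- for every preferred extension of defenses `D`,
`def(D)` is a preferred extension of `F`. -/
theorem statement5 {A : Type*} (F : AF A) (D : Set (Option A × A))
    (hD : D ∈ F.PR) : F.defSet D ∈ F.pr := by
  obtain ⟨hDc, hDmax⟩ := hD
  have hDsub : D ⊆ F.nmd := hDc.1.1.1
  have hEc : F.Complete (F.defSet D) := AF.defSet_complete hDc
  have key : ∀ E', F.Complete E' → F.defSet D ⊆ E' → D = F.dE E' := by
    intro E' hE' hsub
    have h1 : D ⊆ F.dE E' := (AF.subset_dE_defSet hDsub).trans (AF.dE_mono hsub)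
    obtain ⟨D'', hD''c, hD''sub⟩ :=
      AF.exists_dComplete_superset (AF.dE_dAdmissible hE')
    have h2 : D = D'' := hDmax D'' hD''c (h1.trans hD''sub)
    refine Set.Subset.antisymm h1 ?_
    intro p hp
    rw [h2]
    exact hD''sub hp
  refine ⟨hEc, ?_⟩
  intro E' hE' hsub
  rw [key E' hE' hsub]
  exact AF.defSet_dE hE'
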